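/- Under the hypotheses of the sequential bipartite construction, for the first group (k=1): after connecting b_1 to F(1) vertices of minimal degree α_1, there exists a completion of b_1's connections such that the updated sequences admit a bipartite graph if and only if F(1) lies in the interval [max{b_1 − M, 0}, min{m_1, D_left + D_now + D_right}], where M = Σ_{k≥2} m_k, D_left = Σ_{h<α_1}(z_h − b'_h), D_now = z_{α_1} − b'_{α_1}, and D_right = min{0, min_{r>α_1} Σ_{h=α_1+1}^{r}(z_h − b'_h)}, with z the conjugate of a and b' = (b_2,…,b_n) padded with zeros. -/

import Mathlib

/-- There is a bipartite graph with degree sequences `a` and `b`. -/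
def hasBG (m n : ℕ) (a : Fin m → ℕ) (b : Fin n → ℕ) : Prop :=
  ∃ M : Fin m → Fin n → Bool,
    (∀ i, (Finset.univ.filter (fun j => M i j = true)).card = a i) ∧
    (∀ j, (Finset.univ.filter (fun i => M i j = true)).card = b j)

/-- Conjugate vector: `zconj m a h = |{i : a i ≥ h}|`. -/
def zconj (m : ℕ) (a : Fin m → ℕ) (h : ℕ) : ℕ :=
  (Finset.univ.filter (fun i => h ≤ a i)).card

/-- The sequence `b' = (b 1, …, b n)` (the tail of `b`), padded with zeros:
`bpad n b h = b h` for `1 ≤ h ≤ n`, and `0` beyond. -/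
def bpad (n : ℕ) (b : Fin (n + 1) → ℕ) (h : ℕ) : ℕ :=
  if h2 : h < n + 1 then b ⟨h, h2⟩ else 0

open Finset

/-- `c` padded with zeros beyond its domain. -/
def padf (N : ℕ) (c : Fin N → ℕ) (h : ℕ) : ℕ :=
  if h2 : h < N then c ⟨h, h2⟩ else 0

lemma padf_eq (N : ℕ) (c : Fin N → ℕ) (j : Fin N) : padf N c j = c j := by
  simp [padf, j.isLt]

lemma padf_zero (N : ℕ) (c : Fin N → ℕ) (h : ℕ) (hh : N ≤ h) : padf N c h = 0 := by
  simp [padf, Nat.not_lt.2 hh]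

lemma sum_padf_range (N k : ℕ) (c : Fin N → ℕ) :
    ∑ h ∈ range k, padf N c h
      = ∑ j ∈ univ.filter (fun j : Fin N => (j : ℕ) < k), c j := by
  have h1 : ∑ j ∈ univ.filter (fun j : Fin N => (j : ℕ) < k), c j
      = ∑ j : Fin N, (fun h : ℕ => if h < k then padf N c h else 0) (j : ℕ) := by
    rw [sum_filter]
    exact sum_congr rfl (fun j _ => by simp [padf_eq])
  rw [h1, Fin.sum_univ_eq_sum_range (fun h : ℕ => if h < k then padf N c h else 0) N, ← sum_filter]
  rw [show ∑ h ∈ range k, padf N c h = ∑ h ∈ (range k).filter (· < N), padf N c h from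
    (sum_filter_of_ne (fun x _ hx => by by_contra hc; exact hx (padf_zero N c x (Nat.le_of_not_lt hc)))).symm]
  apply sum_congr _ (fun _ _ => rfl)
  ext h; simp only [mem_filter, mem_range]; tauto

lemma hasBG_sum_eq {m n : ℕ} {a : Fin m → ℕ} {b : Fin n → ℕ} (h : hasBG m n a b) :
    ∑ i, a i = ∑ j, b j := by
  obtain ⟨M, hr, hc⟩ := h
  calc ∑ i, a i = ∑ i, ∑ j, (if M i j then 1 else 0) := by
        refine sum_congr rfl (fun i _ => ?_)
        rw [← hr i, card_filter]
    _ = ∑ j, ∑ i, (if M i j then 1 else 0) := sum_comm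
    _ = ∑ j, b j := by
        refine sum_congr rfl (fun j _ => ?_)
        rw [← hc j, card_filter]

lemma hasBG_dom {m n : ℕ} {a : Fin m → ℕ} {b : Fin n → ℕ} (h : hasBG m n a b) (k : ℕ) :
    ∑ hh ∈ range k, padf n b hh ≤ ∑ i, min (a i) k := by
  obtain ⟨M, hr, hc⟩ := h
  rw [sum_padf_range]
  calc ∑ j ∈ univ.filter (fun j : Fin n => (j : ℕ) < k), b j
      = ∑ j ∈ univ.filter (fun j : Fin n => (j : ℕ) < k), ∑ i, (if M i j then 1 else 0) := by
        refine sum_congr rfl (fun j _ => ?_); rw [← hc j, card_filter]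
    _ = ∑ i, ∑ j ∈ univ.filter (fun j : Fin n => (j : ℕ) < k), (if M i j then 1 else 0) := sum_comm
    _ ≤ ∑ i, min (a i) k := by
        refine sum_le_sum (fun i _ => ?_)
        have e : ∑ j ∈ univ.filter (fun j : Fin n => (j : ℕ) < k), (if M i j then 1 else 0)
            = ((univ.filter (fun j : Fin n => (j : ℕ) < k)).filter (fun j => M i j)).card :=
          (card_filter _ _).symm
        rw [e]
        refine le_min ?_ ?_
        · rw [← hr i]
          exact card_le_card (fun x hx => by
            simp only [mem_filter] at *; exact ⟨hx.1.1, hx.2⟩)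
        · refine le_trans (card_le_card (filter_subset _ _)) ?_
          have h5 : (univ.filter (fun j : Fin n => (j : ℕ) < k)).card ≤ (range k).card :=
            Finset.card_le_card_of_injOn Fin.val (fun x hx => by
              simp only [mem_coe, mem_filter, mem_range] at *; exact hx.2) (Fin.val_injective.injOn)
          simpa using h5

lemma zconj' (m : ℕ) (a : Fin m → ℕ) (h : ℕ) : zconj m a h = ∑ i, if h ≤ a i then 1 else 0 :=
  card_filter _ _

lemma sum_zconj (m : ℕ) (a : Fin m → ℕ) (k : ℕ) :
    ∑ h ∈ Icc 1 k, zconj m a h = ∑ i, min (a i) k := by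
  calc ∑ h ∈ Icc 1 k, zconj m a h = ∑ h ∈ Icc 1 k, ∑ i, if h ≤ a i then 1 else 0 := by
        exact sum_congr rfl (fun h _ => zconj' m a h)
    _ = ∑ i, ∑ h ∈ Icc 1 k, if h ≤ a i then 1 else 0 := sum_comm
    _ = ∑ i, min (a i) k := by
        refine sum_congr rfl (fun i _ => ?_)
        rw [← card_filter]
        have : (Icc 1 k).filter (fun h => h ≤ a i) = Icc 1 (min (a i) k) := by
          ext h; simp only [mem_filter, mem_Icc, le_min_iff]; omega
        rw [this, Nat.card_Icc]
        omega

/-- Greedy subset: a subset of `C` of size `c` on which `f` is largest. -/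
lemma greedy_subset {γ : Type*} [DecidableEq γ] (C : Finset γ) (f : γ → ℕ) (c : ℕ)
    (hc : c ≤ C.card) :
    ∃ T ⊆ C, T.card = c ∧ ∀ i ∈ T, ∀ i' ∈ C \ T, f i' ≤ f i := by
  induction c with
  | zero => exact ⟨∅, empty_subset _, card_empty, by simp⟩
  | succ c ih =>
    obtain ⟨T, hTC, hTcard, hTmax⟩ := ih (Nat.le_of_succ_le hc)
    have hne : (C \ T).Nonempty := by
      rw [← card_pos, card_sdiff_of_subset hTC]
      omega
    obtain ⟨i0, hi0, hi0max⟩ := (C \ T).exists_max_image f hne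
    refine ⟨insert i0 T, ?_, ?_, ?_⟩
    · exact insert_subset (mem_sdiff.1 hi0).1 hTC
    · rw [card_insert_of_notMem (mem_sdiff.1 hi0).2, hTcard]
    · intro i hi i' hi'
      rcases mem_insert.1 hi with rfl | hiT
      · exact hi0max i' (by rw [mem_sdiff] at *; exact ⟨hi'.1, fun h => hi'.2 (mem_insert_of_mem h)⟩)
      · exact hTmax i hiT i' (by rw [mem_sdiff] at *; exact ⟨hi'.1, fun h => hi'.2 (mem_insert_of_mem h)⟩)

lemma padf_anti {N : ℕ} {b : Fin N → ℕ} (hb : Antitone b) {h1 h2 : ℕ} (h12 : h1 ≤ h2) :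
    padf N b h2 ≤ padf N b h1 := by
  unfold padf
  split_ifs with u1 u2
  · exact hb (by simp [Fin.le_def]; omega)
  · omega
  · exact Nat.zero_le _
  · exact le_rfl

lemma padf_succ (n : ℕ) (b : Fin (n + 1) → ℕ) (h : ℕ) :
    padf n (fun j => b j.succ) h = padf (n + 1) b (h + 1) := by
  unfold padf
  split_ifs with u1 u2
  · congr 1
  · omega
  · omega
  · rfl

lemma gr_suff : ∀ (n m : ℕ) (a : Fin m → ℕ) (b : Fin n → ℕ), Antitone b →
    (∑ i, a i = ∑ j, b j) →
    (∀ k, ∑ h ∈ range k, padf n b h ≤ ∑ i, min (a i) k) →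
    hasBG m n a b := by
  intro n
  induction n with
  | zero =>
    intro m a b _ hsum _
    have ha0 : ∀ i, a i = 0 := by
      have : ∑ i, a i = 0 := by simpa using hsum
      intro i
      exact (Finset.sum_eq_zero_iff.mp this) i (mem_univ i)
    exact ⟨fun _ j => j.elim0, fun i => by simpa using (ha0 i).symm, fun j => j.elim0⟩
  | succ n ih =>
    intro m a b hb hsum hdom
    -- b 0 ≤ number of i with 1 ≤ a i
    have hb0 : b 0 ≤ (univ.filter (fun i => 1 ≤ a i)).card := by
      have h1 := hdom 1
      have e1 : ∑ h ∈ range 1, padf (n+1) b h = b 0 := by simp [padf]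
      have e2 : ∑ i, min (a i) 1 = (univ.filter (fun i => 1 ≤ a i)).card := by
        rw [card_filter]
        refine sum_congr rfl (fun i _ => ?_)
        split_ifs with h <;> omega
      rw [e1, e2] at h1; exact h1
    have hb0m : b 0 ≤ m := by
      have h6 : (univ.filter (fun i => 1 ≤ a i)).card ≤ (univ : Finset (Fin m)).card :=
        card_le_card (filter_subset _ _)
      simp only [card_univ, Fintype.card_fin] at h6
      omega
    obtain ⟨S, -, hScard, hSmax⟩ := greedy_subset (univ : Finset (Fin m)) a (b 0)
      (by simpa using hb0m)
    have hS1 : ∀ i ∈ S, 1 ≤ a i := by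
      intro i hi
      by_contra hc
      push_neg at hc
      interval_cases h : a i
      -- a i = 0
      have hsub : univ.filter (fun i => 1 ≤ a i) ⊆ S.erase i := by
        intro x hx
        rw [mem_filter] at hx
        rw [mem_erase]
        constructor
        · rintro rfl; omega
        · by_contra hxS
          have := hSmax i hi x (mem_sdiff.2 ⟨mem_univ x, hxS⟩)
          omega
      have h8 := card_le_card hsub
      rw [card_erase_of_mem hi, hScard] at h8
      have h9 : 1 ≤ b 0 := hScard ▸ card_pos.2 ⟨i, hi⟩
      omega
    set a' : Fin m → ℕ := fun i => a i - (if i ∈ S then 1 else 0) with ha'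
    have hsum_ite : ∑ i, (if i ∈ S then 1 else 0) = b 0 := by
      rw [← hScard, ← card_filter]
      congr 1
      simp [filter_mem_eq_inter]
    have hsum' : ∑ i, a' i = ∑ j : Fin n, b j.succ := by
      have e1 : ∑ i, a' i + b 0 = ∑ i, a i := by
        rw [← hsum_ite, ← sum_add_distrib]
        refine sum_congr rfl (fun i _ => ?_)
        by_cases hi : i ∈ S <;> simp [ha', hi]
        · have := hS1 i hi; omega
      have e2 : ∑ j, b j = b 0 + ∑ j : Fin n, b j.succ := Fin.sum_univ_succ b
      omega
    have hdom' : ∀ k, ∑ h ∈ range k, padf n (fun j => b j.succ) h ≤ ∑ i, min (a' i) k := by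
      intro k
      have lhs_eq : ∑ h ∈ range k, padf n (fun j => b j.succ) h
          = ∑ h ∈ range k, padf (n+1) b (h+1) :=
        sum_congr rfl (fun h _ => padf_succ n b h)
      by_cases hcase : ∃ i0, i0 ∉ S ∧ k + 1 ≤ a i0
      · -- Case A
        obtain ⟨i0, hi0S, hi0⟩ := hcase
        have hSbig : ∀ i ∈ S, k + 1 ≤ a i := fun i hi =>
          le_trans hi0 (hSmax i hi i0 (mem_sdiff.2 ⟨mem_univ i0, hi0S⟩))
        have rhs_eq : ∑ i, min (a' i) k = ∑ i, min (a i) k := by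
          refine sum_congr rfl (fun i _ => ?_)
          by_cases hi : i ∈ S
          · have := hSbig i hi
            simp only [ha', hi, if_pos]
            omega
          · simp [ha', hi]
        rw [lhs_eq, rhs_eq]
        refine le_trans (sum_le_sum (fun h _ => padf_anti hb (Nat.le_succ h))) (hdom k)
      · -- Case B
        push_neg at hcase
        have hsmall : ∀ i, i ∉ S → a i ≤ k := fun i hi => by have := hcase i hi; omega
        have rhs_eq : ∑ i, min (a i) (k+1) = ∑ i, min (a' i) k + b 0 := by
          rw [← hsum_ite, ← sum_add_distrib]
          refine sum_congr rfl (fun i _ => ?_)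
          by_cases hi : i ∈ S
          · have := hS1 i hi
            simp only [ha', hi, if_pos]
            omega
          · have := hsmall i hi
            simp only [ha', hi, if_neg, not_false_iff]
            omega
        have lhs_eq2 : ∑ h ∈ range (k+1), padf (n+1) b h
            = ∑ h ∈ range k, padf (n+1) b (h+1) + b 0 := by
          rw [Finset.sum_range_succ']
          congr 1
        have := hdom (k+1)
        rw [lhs_eq2, rhs_eq] at this
        rw [lhs_eq]
        omega
    obtain ⟨M', hr', hc'⟩ := ih m a' (fun j => b j.succ)
      (fun j1 j2 h12 => hb (Fin.succ_le_succ_iff.mpr h12)) hsum' hdom'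
    refine ⟨fun i => Fin.cons (α := fun _ => Bool) (decide (i ∈ S)) (M' i), ?_, ?_⟩
    · intro i
      rw [card_filter, Fin.sum_univ_succ
        (f := fun j => if (Fin.cons (α := fun _ => Bool) (decide (i ∈ S)) (M' i)) j = true then 1 else 0)]
      have e1 : ∑ j : Fin n, (if Fin.cons (α := fun _ => Bool) (decide (i ∈ S)) (M' i) (Fin.succ j) = true then 1 else 0)
          = a' i := by
        rw [← hr' i, card_filter]
        exact sum_congr rfl (fun j _ => by rw [Fin.cons_succ])
      rw [e1]
      simp only [Fin.cons_zero]
      have e0 : (if decide (i ∈ S) = true then 1 else 0) = (if i ∈ S then 1 else 0) := by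
        simp only [decide_eq_true_eq]
      rw [e0]
      by_cases hi : i ∈ S
      · have := hS1 i hi
        simp only [ha', if_pos hi]
        omega
      · simp only [ha', if_neg hi]
        omega
    · intro j
      induction j using Fin.cases with
      | zero =>
        rw [← hScard]
        congr 1
        ext i
        simp
      | succ j' =>
        have h7 := hc' j'
        simp only at h7
        rw [← h7]
        congr 1

lemma Icc1_eq_Ioc0 (k : ℕ) : Icc 1 k = Ioc 0 k := by rw [← Finset.Icc_add_one_left_eq_Ioc]; rfl

lemma Icc_succ_sum {M : Type*} [AddCommMonoid M] (f : ℕ → M) (k : ℕ) :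
    ∑ h ∈ Icc 1 (k + 1), f h = ∑ h ∈ Icc 1 k, f h + f (k + 1) := by
  have e : Icc 1 (k + 1) = insert (k + 1) (Icc 1 k) := by
    ext x; simp only [mem_Icc, mem_insert]; omega
  rw [e, sum_insert (by simp [mem_Icc])]
  exact add_comm _ _

lemma Icc_split {M : Type*} [AddCommMonoid M] (f : ℕ → M) (u v : ℕ) (h : u ≤ v) :
    ∑ h ∈ Icc 1 v, f h = ∑ h ∈ Icc 1 u, f h + ∑ h ∈ Icc (u + 1) v, f h := by
  rw [Icc1_eq_Ioc0, Icc1_eq_Ioc0, Finset.Icc_add_one_left_eq_Ioc]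
  exact (Finset.sum_Ioc_consecutive f (Nat.zero_le u) h).symm

lemma hasBG_deg_le {m n : ℕ} {a : Fin m → ℕ} {b : Fin n → ℕ} (h : hasBG m n a b) :
    ∀ i, a i ≤ n := by
  obtain ⟨M, hr, _⟩ := h
  intro i
  rw [← hr i]
  have h5 : (univ.filter (fun j => M i j = true)).card ≤ (univ : Finset (Fin n)).card :=
    card_le_card (filter_subset _ _)
  simpa using h5


/-- Theorem 1 (base case, `k = 1`): let `(a, b)` be a feasible pair with `b` non-increasing,
all degrees positive, and let `α` be the minimal degree on the `a`-side.  Then node `b 0`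
can connect to exactly `F1` vertices of degree `α` with a feasible completion of its
remaining connections if and only if
`max{b 0 − M, 0} ≤ F1 ≤ min{m₁, D_left + D_now + D_right}`. -/
theorem stmt8 (m n : ℕ) (a : Fin m → ℕ) (b : Fin (n + 1) → ℕ)
    (hb : Antitone b) (ha : ∀ i, 1 ≤ a i) (hbpos : ∀ j, 1 ≤ b j)
    (hfeas : hasBG m (n + 1) a b)
    (α : ℕ) (hα₁ : ∃ i, a i = α) (hα₂ : ∀ i, α ≤ a i)
    (F1 : ℕ) :
    (∃ S : Finset (Fin m), S.card = b 0 ∧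
        (S.filter (fun i => a i = α)).card = F1 ∧
        hasBG m n (fun i => a i - (if i ∈ S then 1 else 0)) (fun j => b j.succ))
    ↔ (b 0 - (Finset.univ.filter (fun i : Fin m => α < a i)).card ≤ F1 ∧
        F1 ≤ (Finset.univ.filter (fun i : Fin m => a i = α)).card ∧
        (F1 : ℤ) ≤
          (∑ h ∈ Finset.Icc 1 (α - 1), ((zconj m a h : ℤ) - (bpad n b h : ℤ)))
          + ((zconj m a α : ℤ) - (bpad n b α : ℤ))
          + min (sInf {s : ℤ | ∃ r ∈ Finset.Icc (α + 1) (n + 1),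
              s = ∑ h ∈ Finset.Icc (α + 1) r,
                    ((zconj m a h : ℤ) - (bpad n b h : ℤ))}) 0) := by
  classical
  set A : Finset (Fin m) := univ.filter (fun i => a i = α) with hA
  set C : Finset (Fin m) := univ.filter (fun i => α < a i) with hC
  set Z : ℕ → ℕ := fun k => ∑ i, min (a i) k with hZ
  set Bp : ℕ → ℕ := fun k => ∑ h ∈ Icc 1 k, bpad n b h with hBp
  have hbpadf : bpad n b = padf (n + 1) b := rfl
  have F0 : ∀ i, a i ≤ n + 1 := hasBG_deg_le hfeas
  have Fsum : ∑ i, a i = ∑ j, b j := hasBG_sum_eq hfeas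
  have Fdom : ∀ k, ∑ h ∈ range k, padf (n + 1) b h ≤ Z k := hasBG_dom hfeas
  have hα1 : 1 ≤ α := by obtain ⟨i, hi⟩ := hα₁; rw [← hi]; exact ha i
  have hαn : α ≤ n + 1 := by obtain ⟨i, hi⟩ := hα₁; rw [← hi]; exact F0 i
  -- Bp in terms of shifted range sums
  have Ficc : ∀ (f : ℕ → ℕ) k, ∑ h ∈ Icc 1 k, f h = ∑ h ∈ range k, f (h + 1) := by
    intro f k
    induction k with
    | zero => simp
    | succ k ihk => rw [Finset.sum_range_succ, ← ihk, Icc_succ_sum]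
  have Fbp : ∀ k, b 0 + Bp k = ∑ h ∈ range (k + 1), padf (n + 1) b h := by
    intro k
    rw [Finset.sum_range_succ']
    simp only [hBp, hbpadf]
    rw [Ficc (padf (n+1) b) k]
    have : padf (n + 1) b 0 = b 0 := by simp [padf]
    omega
  have Ftail : ∀ k, ∑ h ∈ range k, padf n (fun j => b j.succ) h = Bp k := by
    intro k
    simp only [hBp, hbpadf]
    rw [Ficc (padf (n+1) b) k]
    exact sum_congr rfl (fun h _ => padf_succ n b h)
  have FdomB : ∀ k, Bp k ≤ Z k := by
    intro k
    simp only [hBp, hbpadf]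
    rw [Ficc (padf (n+1) b) k]
    refine le_trans (sum_le_sum (fun h _ => padf_anti hb (Nat.le_succ h))) ?_
    have := Fdom k
    simp only [hZ] at this ⊢
    exact this
  have FdomB2 : ∀ k, b 0 + Bp k ≤ Z (k + 1) := fun k => (Fbp k) ▸ Fdom (k + 1)
  have Fzstep : ∀ k, Z (k + 1) = Z k + (univ.filter (fun i => k + 1 ≤ a i)).card := by
    intro k
    simp only [hZ]
    rw [card_filter, ← sum_add_distrib]
    refine sum_congr rfl (fun i _ => ?_)
    split_ifs with h <;> omega
  have Fzfull : Z (n + 1) = b 0 + Bp (n + 1) := by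
    have e1 : Z (n + 1) = ∑ i, a i := sum_congr rfl (fun i _ => min_eq_left (F0 i))
    have e2 : ∑ j, b j = ∑ h ∈ range (n + 2), padf (n + 1) b h := by
      rw [sum_padf_range]
      apply sum_congr _ (fun _ _ => rfl)
      rw [filter_true_of_mem]
      intro x _
      omega
    rw [e1, Fsum, e2, ← Fbp (n + 1)]
  -- characterization of feasible completions
  have resid_iff : ∀ S : Finset (Fin m), S.card = b 0 →
      (hasBG m n (fun i => a i - (if i ∈ S then 1 else 0)) (fun j => b j.succ) ↔
        ∀ k, Bp k + (S.filter (fun i => a i ≤ k)).card ≤ Z k) := by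
    intro S hS0
    have key : ∀ k, ∑ i, min (a i - (if i ∈ S then 1 else 0)) k
        + (S.filter (fun i => a i ≤ k)).card = Z k := by
      intro k
      have e : S.filter (fun i => a i ≤ k) = univ.filter (fun i => i ∈ S ∧ a i ≤ k) := by
        ext x; simp [mem_filter]
      rw [e, card_filter, ← sum_add_distrib]
      refine sum_congr rfl (fun i _ => ?_)
      have h1 := ha i
      by_cases hi : i ∈ S
      · simp only [if_pos hi, hi, true_and]
        split_ifs with h <;> omega
      · simp only [if_neg hi, hi, false_and, if_false]
        omega
    have hsum' : ∑ i, (a i - (if i ∈ S then 1 else 0)) + b 0 = ∑ i, a i := by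
      have : ∑ i, (if i ∈ S then 1 else 0) = b 0 := by
        rw [← hS0, ← card_filter]
        congr 1
        simp [filter_mem_eq_inter]
      rw [← this, ← sum_add_distrib]
      refine sum_congr rfl (fun i _ => ?_)
      have := ha i
      split_ifs <;> omega
    constructor
    · intro hres k
      have h1 := hasBG_dom hres k
      rw [Ftail k] at h1
      have h2 := key k
      omega
    · intro hcons
      apply gr_suff
      · exact fun j1 j2 h12 => hb (Fin.succ_le_succ_iff.mpr h12)
      · have e2 : ∑ j, b j = b 0 + ∑ j : Fin n, b j.succ := Fin.sum_univ_succ b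
        omega
      · intro k
        rw [Ftail k]
        have := key k
        have := hcons k
        omega
  -- the combinatorial middle form
  have middle : (∃ S : Finset (Fin m), S.card = b 0 ∧
        (S.filter (fun i => a i = α)).card = F1 ∧
        hasBG m n (fun i => a i - (if i ∈ S then 1 else 0)) (fun j => b j.succ))
      ↔ (b 0 ≤ F1 + C.card ∧ F1 ≤ A.card ∧
          ∀ r ∈ Icc α (n + 1), F1 + Bp r ≤ Z r) := by
    constructor
    · rintro ⟨S, hS0, hSF, hres⟩
      have hcons := (resid_iff S hS0).1 hres
      refine ⟨?_, ?_, ?_⟩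
      · -- b 0 ≤ F1 + C.card
        have h1 := card_filter_add_card_filter_not (s := S) (p := fun i => a i = α)
        have h2 : (S.filter (fun i => ¬ a i = α)).card ≤ C.card := by
          apply card_le_card
          intro x hx
          rw [mem_filter] at hx ⊢
          have := hα₂ x
          exact ⟨mem_univ x, by omega⟩
        omega
      · exact hSF ▸ card_le_card (fun x hx => by
          rw [mem_filter] at hx ⊢; exact ⟨mem_univ x, hx.2⟩)
      · intro r hr
        rw [mem_Icc] at hr
        have h1 := hcons r
        have h2 : F1 ≤ (S.filter (fun i => a i ≤ r)).card := by
          rw [← hSF]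
          apply card_le_card
          intro x hx
          rw [mem_filter] at hx ⊢
          exact ⟨hx.1, by omega⟩
        omega
    · rintro ⟨hP1, hP2, hP3⟩
      have hF1b0 : F1 ≤ b 0 := by
        have := hP3 (n + 1) (mem_Icc.2 ⟨hαn, le_rfl⟩)
        omega
      obtain ⟨SA, hSA_sub, hSA_card⟩ := Finset.exists_subset_card_eq hP2
      obtain ⟨SC, hSC_sub, hSC_card, hSC_max⟩ := greedy_subset C a (b 0 - F1) (by omega)
      have hdisjAC : ∀ x, x ∈ A → x ∈ C → False := by
        intro x hx1 hx2
        rw [hA, mem_filter] at hx1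
        rw [hC, mem_filter] at hx2
        omega
      have hdisj : Disjoint SA SC :=
        disjoint_left.2 (fun x hx1 hx2 => hdisjAC x (hSA_sub hx1) (hSC_sub hx2))
      refine ⟨SA ∪ SC, ?_, ?_, ?_⟩
      · rw [card_union_of_disjoint hdisj, hSA_card, hSC_card]; omega
      · have e : (SA ∪ SC).filter (fun i => a i = α) = SA := by
          ext x
          rw [mem_filter, mem_union]
          constructor
          · rintro ⟨hx1 | hx1, hx2⟩
            · exact hx1
            · exact absurd (hSC_sub hx1) (fun hxC => by rw [hC, mem_filter] at hxC; omega)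
          · intro hx
            have := hSA_sub hx
            rw [hA, mem_filter] at this
            exact ⟨Or.inl hx, this.2⟩
        rw [e, hSA_card]
      · rw [resid_iff _ (by rw [card_union_of_disjoint hdisj, hSA_card, hSC_card]; omega)]
        intro k
        rcases lt_or_ge k α with hk | hk
        · -- small k
          have e : (SA ∪ SC).filter (fun i => a i ≤ k) = ∅ := by
            rw [filter_eq_empty_iff]
            intro x _
            have := hα₂ x
            omega
          rw [e]
          simpa using FdomB k
        · by_cases hcase : ∃ i', i' ∈ C \ SC ∧ k + 1 ≤ a i'
          · -- all chosen SC elements are large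
            obtain ⟨i0, hi0, hi0k⟩ := hcase
            have hbig : ∀ i ∈ SC, k + 1 ≤ a i := fun i hi =>
              le_trans hi0k (hSC_max i hi i0 hi0)
            have hsub : (SA ∪ SC).filter (fun i => a i ≤ k) ⊆ SA := by
              intro x hx
              rw [mem_filter, mem_union] at hx
              rcases hx.1 with h | h
              · exact h
              · exact absurd (hbig x h) (by omega)
            have h2 : ((SA ∪ SC).filter (fun i => a i ≤ k)).card ≤ F1 :=
              hSA_card ▸ card_le_card hsub
            have hkn : k ≤ n + 1 := by
              have := F0 i0; omega
            have := hP3 k (mem_Icc.2 ⟨hk, hkn⟩)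
            omega
          · -- all unchosen elements are small
            push_neg at hcase
            set W : Finset (Fin m) := univ.filter (fun i => k + 1 ≤ a i) with hW
            have hWsub : W ⊆ SA ∪ SC := by
              intro x hx
              rw [hW, mem_filter] at hx
              have hxC : x ∈ C := by
                rw [hC, mem_filter]
                exact ⟨mem_univ x, by omega⟩
              by_contra hxS
              rw [mem_union] at hxS
              push_neg at hxS
              have := hcase x (mem_sdiff.2 ⟨hxC, hxS.2⟩)
              omega
            have hWdisj : Disjoint ((SA ∪ SC).filter (fun i => a i ≤ k)) W := by
              rw [disjoint_left]
              intro x hx1 hx2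
              rw [mem_filter] at hx1
              rw [hW, mem_filter] at hx2
              omega
            have hcard : ((SA ∪ SC).filter (fun i => a i ≤ k)).card + W.card ≤ b 0 := by
              rw [← card_union_of_disjoint hWdisj]
              refine le_trans (card_le_card (union_subset (filter_subset _ _) hWsub)) ?_
              rw [card_union_of_disjoint hdisj, hSA_card, hSC_card]
              omega
            have h1 := FdomB2 k
            have h2 := Fzstep k
            rw [← hW] at h2
            omega
  -- Step III: arithmetic equivalence with the stated right-hand side
  set fz : ℕ → ℤ := fun h => ((zconj m a h : ℤ) - (bpad n b h : ℤ)) with hfz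
  set Tz : ℕ → ℤ := fun k => ∑ h ∈ Icc 1 k, fz h with hTz
  have e_T : ∀ r, Tz r = (Z r : ℤ) - (Bp r : ℤ) := by
    intro r
    simp only [hTz, hfz, sum_sub_distrib, hZ, hBp]
    rw [← Nat.cast_sum, ← Nat.cast_sum, sum_zconj]
  have e_left : (∑ h ∈ Icc 1 (α - 1), ((zconj m a h : ℤ) - (bpad n b h : ℤ)))
      + ((zconj m a α : ℤ) - (bpad n b α : ℤ)) = Tz α := by
    have e0 : α = (α - 1) + 1 := by omega
    conv_rhs => rw [e0]
    simp only [hTz]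
    rw [Icc_succ_sum fz (α - 1), ← e0]
  have e_split : ∀ r, α ≤ r → Tz r = Tz α + ∑ h ∈ Icc (α + 1) r, fz h := by
    intro r hr
    simp only [hTz]
    exact Icc_split fz α r hr
  have key3 : (∀ r ∈ Icc α (n + 1), F1 + Bp r ≤ Z r) ↔
      ((F1 : ℤ) ≤
          (∑ h ∈ Finset.Icc 1 (α - 1), ((zconj m a h : ℤ) - (bpad n b h : ℤ)))
          + ((zconj m a α : ℤ) - (bpad n b α : ℤ))
          + min (sInf {s : ℤ | ∃ r ∈ Finset.Icc (α + 1) (n + 1),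
              s = ∑ h ∈ Finset.Icc (α + 1) r,
                    ((zconj m a h : ℤ) - (bpad n b h : ℤ))}) 0) := by
    rw [e_left]
    have hset : {s : ℤ | ∃ r ∈ Finset.Icc (α + 1) (n + 1),
        s = ∑ h ∈ Finset.Icc (α + 1) r, ((zconj m a h : ℤ) - (bpad n b h : ℤ))}
        = ↑((Icc (α + 1) (n + 1)).image (fun r => ∑ h ∈ Icc (α + 1) r, fz h)) := by
      ext s
      simp only [Set.mem_setOf_eq, coe_image, Set.mem_image, mem_coe, hfz]
      constructor
      · rintro ⟨r, hr, rfl⟩; exact ⟨r, hr, rfl⟩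
      · rintro ⟨r, hr, rfl⟩; exact ⟨r, hr, rfl⟩
    rw [hset]
    set G : Finset ℤ := (Icc (α + 1) (n + 1)).image (fun r => ∑ h ∈ Icc (α + 1) r, fz h)
      with hG
    rcases le_or_gt (α + 1) (n + 1) with hcase | hcase
    · -- G nonempty
      have hGne : G.Nonempty := by
        rw [hG]
        exact (Finset.nonempty_Icc.2 hcase).image _
      have hbdd : BddBelow (↑G : Set ℤ) := G.finite_toSet.bddBelow
      have hmem : sInf (↑G : Set ℤ) ∈ (↑G : Set ℤ) :=
        Int.csInf_mem (Finset.coe_nonempty.2 hGne) hbdd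
      constructor
      · intro hall
        have h1 : (F1 : ℤ) ≤ Tz α := by
          have := hall α (mem_Icc.2 ⟨le_rfl, hαn⟩)
          have := e_T α
          omega
        rw [mem_coe, hG, Finset.mem_image] at hmem
        obtain ⟨r0, hr0, hr0e⟩ := hmem
        rw [mem_Icc] at hr0
        have h2 : (F1 : ℤ) ≤ Tz α + sInf (↑G : Set ℤ) := by
          rw [← hr0e, ← e_split r0 (by omega)]
          have := hall r0 (mem_Icc.2 ⟨by omega, hr0.2⟩)
          have := e_T r0
          omega
        omega
      · intro hbig r hr
        rw [mem_Icc] at hr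
        rcases eq_or_lt_of_le hr.1 with heq | hlt
        · rw [← heq]
          have := e_T α
          omega
        · have hx : (∑ h ∈ Icc (α + 1) r, fz h) ∈ G := by
            rw [hG, Finset.mem_image]
            exact ⟨r, mem_Icc.2 ⟨by omega, hr.2⟩, rfl⟩
          have h3 : sInf (↑G : Set ℤ) ≤ ∑ h ∈ Icc (α + 1) r, fz h :=
            csInf_le hbdd (mem_coe.2 hx)
          have h4 := e_split r (by omega)
          have := e_T r
          omega
    · -- G empty
      have hGe : G = ∅ := by
        rw [hG, Finset.image_eq_empty, Icc_eq_empty]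
        omega
      rw [hGe]
      simp only [coe_empty]
      rw [Int.csInf_empty]
      have hone : Icc α (n + 1) = {α} := by
        have : α = n + 1 := by omega
        rw [this, Icc_self]
      rw [hone]
      constructor
      · intro hall
        have := hall α (mem_singleton_self α)
        have := e_T α
        omega
      · intro hbig r hr
        rw [mem_singleton] at hr
        subst hr
        have := e_T r
        omega
  rw [middle]
  have c1 : (b 0 ≤ F1 + C.card) ↔ (b 0 - C.card ≤ F1) := by omega
  rw [c1, key3]
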